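/- Let G = (L, R, E) be a bipartite graph with nonnegative, pairwise-distinct edge weights, let p ∈ [0,1], and let L' ⊆ L contain each vertex of L independently with probability p. Consider the greedy-based online algorithm: for each u ∈ L \ L', its candidate edge is the edge incident to u in Greedy(G[L' ∪ {u}]) (if any); the online vertices L \ L' are processed in some order, and a candidate edge (u, r) is added to the output matching M if r is not already matched in M. Then for every rule assigning an arrival order to L \ L' (possibly depending on L'), E[w(M)] ≥ (1 − p) · E[w(Greedy(G[L']))], where expectations are over the random sample L'. -/

import Mathlib

open Finset

open scoped Classical
set_option linter.unusedSectionVars false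
set_option maxHeartbeats 1000000

/-- Greedy matching with fuel: repeatedly pick the maximum-weight remaining edge and
discard all edges conflicting with it. -/
noncomputable def greedyAux {α : Type*} [DecidableEq α] (w : α → ℝ)
    (conflict : α → α → Prop) : ℕ → Finset α → Finset α
  | 0, _ => ∅
  | n + 1, F =>
    if h : F.Nonempty then
      let e := (F.exists_max_image w h).choose
      insert e (greedyAux w conflict n (F.filter fun f => ¬ conflict e f))
    else ∅

/-- The greedy matching of an edge set `F`: process edges in decreasing order of weight,
adding an edge whenever it conflicts with no previously added edge. -/
noncomputable def greedy {α : Type*} [DecidableEq α] (w : α → ℝ)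
    (conflict : α → α → Prop) (F : Finset α) : Finset α :=
  greedyAux w conflict F.card F

/-- Two edges of a bipartite graph conflict iff they share an endpoint. -/
def bconf {L R : Type*} (e f : L × R) : Prop := e.1 = f.1 ∨ e.2 = f.2

/-- The edge set of the subgraph `G[U ∪ R]` induced by a set `U` of left vertices
(together with the whole right side). -/
def subL {L R : Type*} [DecidableEq L] (E : Finset (L × R)) (U : Finset L) :
    Finset (L × R) :=
  E.filter fun e => e.1 ∈ U

/-- Expectation of `f` over a random subset of `s` containing each element
independently with probability `p`. -/
noncomputable def expSubsets {ι : Type*} (p : ℝ) (s : Finset ι) (f : Finset ι → ℝ) : ℝ :=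
  ∑ A ∈ s.powerset, p ^ A.card * (1 - p) ^ (s.card - A.card) * f A

/-- A set of edges is a matching if no two distinct edges conflict. -/
def isMatching {α : Type*} (conflict : α → α → Prop) (M : Finset α) : Prop :=
  ∀ e ∈ M, ∀ f ∈ M, e ≠ f → ¬ conflict e f

/-- `OPT`: the maximum total weight of a matching contained in the edge set `E`. -/
noncomputable def optWeight {α : Type*} (w : α → ℝ) (conflict : α → α → Prop)
    (E : Finset α) : ℝ :=
  (E.powerset.filter fun M => isMatching conflict M).sup'
    ⟨∅, Finset.mem_filter.mpr ⟨Finset.empty_mem_powerset _,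
        fun e he => absurd he (Finset.notMem_empty e)⟩⟩
    (fun M => ∑ e ∈ M, w e)

/-- One step of the greedy-based online algorithm with sample `L'`: the arriving
vertex `u` gets as candidate the edge incident to `u` in `Greedy(G[L' ∪ {u}])`, and
the candidate edge is added if its right endpoint is not yet matched. -/
noncomputable def stepB {L R : Type*} [DecidableEq L] [DecidableEq R]
    (E : Finset (L × R)) (w : L × R → ℝ) (L' : Finset L)
    (M : Finset (L × R)) (u : L) : Finset (L × R) :=
  M ∪ (greedy w bconf (subL E (insert u L'))).filter
      (fun e => e.1 = u ∧ ∀ f ∈ M, f.2 ≠ e.2)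

/-- The output matching of the greedy-based online algorithm with sample `L'`,
when the online vertices arrive in the order given by `order`. -/
noncomputable def runB {L R : Type*} [DecidableEq L] [DecidableEq R]
    (E : Finset (L × R)) (w : L × R → ℝ) (L' : Finset L) (order : List L) :
    Finset (L × R) :=
  order.foldl (stepB E w L') ∅


/-! ### Auxiliary lemmas -/

section GreedyBasics

variable {L R : Type*} [DecidableEq L] [DecidableEq R]

lemma bconf_symm {e f : L × R} (h : bconf e f) : bconf f e := by
  rcases h with h | h
  · exact Or.inl h.symm
  · exact Or.inr h.symm

lemma bconf_refl (e : L × R) : bconf e e := Or.inl rfl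

lemma greedyAux_subset (w : L × R → ℝ) : ∀ (n : ℕ) (F : Finset (L × R)),
    greedyAux w bconf n F ⊆ F := by
  intro n
  induction n with
  | zero => intro F; simp [greedyAux]
  | succ n ih =>
      intro F
      rw [greedyAux]
      split
      · next h =>
          intro e he
          rcases Finset.mem_insert.1 he with rfl | he
          · exact (F.exists_max_image w h).choose_spec.1
          · exact Finset.filter_subset _ _ (ih _ he)
      · simp

lemma greedyAux_fuel (w : L × R → ℝ) : ∀ (n m : ℕ) (F : Finset (L × R)),
    F.card ≤ n → F.card ≤ m → greedyAux w bconf n F = greedyAux w bconf m F := by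
  intro n
  induction n with
  | zero =>
      intro m F hn _
      have : F = ∅ := Finset.card_eq_zero.1 (Nat.le_zero.1 hn)
      subst this
      cases m <;> simp [greedyAux]
  | succ n ih =>
      intro m F hn hm
      rcases F.eq_empty_or_nonempty with rfl | hF
      · cases m <;> simp [greedyAux]
      · have hcard : 1 ≤ F.card := Finset.card_pos.2 hF
        obtain ⟨m', rfl⟩ : ∃ m', m = m' + 1 := by
          cases m with
          | zero => omega
          | succ m' => exact ⟨m', rfl⟩
        rw [greedyAux, greedyAux, dif_pos hF, dif_pos hF]
        set t := (F.exists_max_image w hF).choose with hts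
        have htF : t ∈ F := (F.exists_max_image w hF).choose_spec.1
        have hsub : F.filter (fun f => ¬ bconf t f) ⊆ F.erase t := by
          intro f hf
          rw [Finset.mem_filter] at hf
          rw [Finset.mem_erase]
          refine ⟨?_, hf.1⟩
          rintro rfl
          exact hf.2 (bconf_refl t)
        have hc : (F.filter (fun f => ¬ bconf t f)).card ≤ F.card - 1 := by
          calc _ ≤ (F.erase t).card := Finset.card_le_card hsub
          _ = F.card - 1 := Finset.card_erase_of_mem htF
        have heq := ih m' (F.filter (fun f => ¬ bconf t f)) (by omega) (by omega)
        simp only [heq]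

lemma greedyAux_succ (w : L × R → ℝ) (n : ℕ) {F : Finset (L × R)} (h : F.Nonempty) :
    greedyAux w bconf (n + 1) F = insert (F.exists_max_image w h).choose
      (greedyAux w bconf n (F.filter fun f => ¬ bconf (F.exists_max_image w h).choose f)) := by
  rw [greedyAux, dif_pos h]

lemma greedy_empty (w : L × R → ℝ) : greedy w bconf (∅ : Finset (L × R)) = ∅ := by
  simp [greedy, greedyAux]

lemma greedy_subset (w : L × R → ℝ) (F : Finset (L × R)) : greedy w bconf F ⊆ F :=
  greedyAux_subset w _ F

lemma greedy_matching (w : L × R → ℝ) (F : Finset (L × R)) :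
    ∀ e ∈ greedy w bconf F, ∀ f ∈ greedy w bconf F, e ≠ f → ¬ bconf e f := by
  suffices h : ∀ (n : ℕ) (F : Finset (L × R)), ∀ e ∈ greedyAux w bconf n F,
      ∀ f ∈ greedyAux w bconf n F, e ≠ f → ¬ bconf e f from h _ F
  intro n
  induction n with
  | zero => intro F; simp [greedyAux]
  | succ n ih =>
      intro F e he f hf hef
      rcases F.eq_empty_or_nonempty with rfl | h
      · simp [greedyAux] at he
      · rw [greedyAux_succ w n h, Finset.mem_insert] at he hf
        set t := (F.exists_max_image w h).choose with hts
        rcases he with rfl | he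
        · rcases hf with rfl | hf
          · exact absurd rfl hef
          · have := greedyAux_subset w n _ hf
            rw [Finset.mem_filter] at this
            exact this.2
        · rcases hf with rfl | hf
          · have := greedyAux_subset w n _ he
            rw [Finset.mem_filter] at this
            exact fun hc => this.2 (bconf_symm hc)
          · exact ih _ e he f hf hef

end GreedyBasics

section GreedyE

variable {L R : Type*} [DecidableEq L] [DecidableEq R]
variable {E : Finset (L × R)} {w : L × R → ℝ}

/-- Unfolding greedy at a known maximum element. -/
lemma greedy_unfold (hwinj : Set.InjOn w ↑E) {F : Finset (L × R)} (hFE : F ⊆ E)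
    {t : L × R} (htF : t ∈ F) (hmax : ∀ f ∈ F, w f ≤ w t) :
    greedy w bconf F = insert t (greedy w bconf (F.filter fun f => ¬ bconf t f)) := by
  have hF : F.Nonempty := ⟨t, htF⟩
  have hcard : 1 ≤ F.card := Finset.card_pos.2 hF
  obtain ⟨k, hk⟩ : ∃ k, F.card = k + 1 := ⟨F.card - 1, by omega⟩
  set t₀ := (F.exists_max_image w hF).choose with ht₀s
  have ht₀F : t₀ ∈ F := (F.exists_max_image w hF).choose_spec.1
  have ht₀max : ∀ f ∈ F, w f ≤ w t₀ := (F.exists_max_image w hF).choose_spec.2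
  have htt : t₀ = t := by
    apply hwinj (hFE ht₀F) (hFE htF)
    exact le_antisymm (hmax _ ht₀F) (ht₀max _ htF)
  have hsub : F.filter (fun f => ¬ bconf t₀ f) ⊆ F.erase t₀ := by
    intro f hf
    rw [Finset.mem_filter] at hf
    rw [Finset.mem_erase]
    exact ⟨fun hc => hf.2 (hc ▸ bconf_refl t₀), hf.1⟩
  have hc : (F.filter (fun f => ¬ bconf t₀ f)).card ≤ k := by
    calc _ ≤ (F.erase t₀).card := Finset.card_le_card hsub
    _ = F.card - 1 := Finset.card_erase_of_mem ht₀F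
    _ ≤ k := by omega
  have hc' : (F.filter (fun f => ¬ bconf t f)).card ≤ k := htt ▸ hc
  conv_lhs => rw [greedy, hk, greedyAux_succ w k hF]
  rw [← ht₀s, htt, greedy]
  congr 1
  exact greedyAux_fuel w k _ _ hc' le_rfl

lemma mem_greedy_max (hwinj : Set.InjOn w ↑E) {F : Finset (L × R)} (hFE : F ⊆ E)
    {t : L × R} (htF : t ∈ F) (hmax : ∀ f ∈ F, w f ≤ w t) : t ∈ greedy w bconf F := by
  rw [greedy_unfold hwinj hFE htF hmax]; exact Finset.mem_insert_self _ _

lemma mem_greedy_iff_of_max (hwinj : Set.InjOn w ↑E) {F : Finset (L × R)} (hFE : F ⊆ E)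
    {t : L × R} (htF : t ∈ F) (hmax : ∀ f ∈ F, w f ≤ w t) {e : L × R} (het : e ≠ t) :
    (e ∈ greedy w bconf F ↔ e ∈ greedy w bconf (F.filter fun f => ¬ bconf t f)) := by
  rw [greedy_unfold hwinj hFE htF hmax, Finset.mem_insert]
  simp [het]

end GreedyE


section MWR

variable {L R : Type*} [DecidableEq L] [DecidableEq R]
variable {E : Finset (L × R)} {w : L × R → ℝ}

/-- Weight of the matching `M` at the right vertex `s`. -/
noncomputable def mwR (w : L × R → ℝ) (M : Finset (L × R)) (s : R) : ℝ :=
  ∑ e ∈ M.filter (fun e => e.2 = s), w e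

lemma mwR_nonneg {M : Finset (L × R)} (h : ∀ e ∈ M, 0 ≤ w e) (s : R) : 0 ≤ mwR w M s :=
  Finset.sum_nonneg fun e he => h e (Finset.filter_subset _ _ he)

lemma mwR_insert_ne {M : Finset (L × R)} {t : L × R} {s : R} (h : ¬ t.2 = s) :
    mwR w (insert t M) s = mwR w M s := by
  unfold mwR
  rw [Finset.filter_insert, if_neg h]

lemma mwR_insert_eq {M : Finset (L × R)} {t : L × R} {s : R} (h : t.2 = s)
    (hM : ∀ e ∈ M, ¬ e.2 = t.2) : mwR w (insert t M) s = w t := by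
  unfold mwR
  rw [Finset.filter_insert, if_pos h]
  have : M.filter (fun e => e.2 = s) = ∅ := by
    rw [Finset.filter_eq_empty_iff]
    intro e he hc
    exact hM e he (hc.trans h.symm)
  rw [this]
  simp

lemma mwR_le_bound {M : Finset (L × R)} {c : ℝ} {s : R}
    (hone : ∀ e ∈ M, ∀ f ∈ M, e ≠ f → ¬ bconf e f)
    (hw : ∀ e ∈ M, w e ≤ c) (hc : 0 ≤ c) : mwR w M s ≤ c := by
  rcases (M.filter (fun e => e.2 = s)).eq_empty_or_nonempty with he | ⟨e, he⟩
  · rw [mwR, he]; simpa using hc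
  · have heM := Finset.mem_filter.1 he
    have : M.filter (fun e => e.2 = s) = {e} := by
      apply Finset.eq_singleton_iff_unique_mem.2
      refine ⟨he, fun f hf => ?_⟩
      have hfM := Finset.mem_filter.1 hf
      by_contra hfe
      exact hone f hfM.1 e heM.1 hfe (Or.inr (hfM.2.trans heM.2.symm))
    rw [mwR, this, Finset.sum_singleton]
    exact hw e heM.1

lemma mwR_eq_of_mem {M : Finset (L × R)} {e : L × R} {s : R}
    (hone : ∀ e ∈ M, ∀ f ∈ M, e ≠ f → ¬ bconf e f)
    (he : e ∈ M) (hs : e.2 = s) : mwR w M s = w e := by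
  have : M.filter (fun f => f.2 = s) = {e} := by
    apply Finset.eq_singleton_iff_unique_mem.2
    refine ⟨Finset.mem_filter.2 ⟨he, hs⟩, fun f hf => ?_⟩
    have hfM := Finset.mem_filter.1 hf
    by_contra hfe
    exact hone f hfM.1 e he hfe (Or.inr (hfM.2.trans hs.symm))
  rw [mwR, this, Finset.sum_singleton]

lemma card_le_of_subset_erase {F G : Finset (L × R)} {t : L × R} {n : ℕ} (htF : t ∈ F)
    (h : G ⊆ F.erase t) (hn : F.card ≤ n + 1) : G.card ≤ n := by
  have h1 := Finset.card_erase_of_mem htF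
  have h2 := Finset.card_le_card h
  omega

lemma greedy_conf_snd {F : Finset (L × R)} {t : L × R} :
    ∀ e ∈ greedy w bconf (F.filter fun f => ¬ bconf t f), ¬ e.2 = t.2 := by
  intro e he
  have := Finset.mem_filter.1 (greedy_subset w _ he)
  exact fun hc => this.2 (Or.inr hc.symm)

/-- Displacement lemmas: removing a left vertex can only decrease each right vertex's
matched weight; removing a right vertex can only increase the other right vertices'
matched weights. -/
lemma dispAB (hw0 : ∀ e ∈ E, 0 ≤ w e) (hwinj : Set.InjOn w ↑E) :
    ∀ (n : ℕ) (F : Finset (L × R)), F ⊆ E → F.card ≤ n →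
      (∀ (v : L) (s : R), mwR w (greedy w bconf (F.filter fun e => ¬ e.1 = v)) s
          ≤ mwR w (greedy w bconf F) s)
      ∧ (∀ (s0 s : R), ¬ s = s0 → mwR w (greedy w bconf F) s
          ≤ mwR w (greedy w bconf (F.filter fun e => ¬ e.2 = s0)) s) := by
  intro n
  induction n with
  | zero =>
      intro F hFE hn
      have : F = ∅ := Finset.card_eq_zero.1 (Nat.le_zero.1 hn)
      subst this
      simp [greedy_empty]
  | succ n ih =>
      intro F hFE hn
      rcases F.eq_empty_or_nonempty with rfl | hF
      · simp [greedy_empty]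
      · obtain ⟨t, htF, hmax⟩ := F.exists_max_image w hF
        have htE := hFE htF
        have hwt : 0 ≤ w t := hw0 t htE
        set F₂ := F.filter (fun f => ¬ bconf t f) with hF₂
        have hF₂E : F₂ ⊆ E := fun f hf => hFE (Finset.filter_subset _ _ hf)
        have hF₂c : F₂.card ≤ n := by
          refine card_le_of_subset_erase htF (fun f hf => ?_) hn
          rw [hF₂, Finset.mem_filter] at hf
          exact Finset.mem_erase.2 ⟨fun hc => hf.2 (hc ▸ bconf_refl t), hf.1⟩
        have hunf : greedy w bconf F = insert t (greedy w bconf F₂) :=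
          greedy_unfold hwinj hFE htF hmax
        have hmatch2 := greedy_matching w F₂
        constructor
        · intro v s
          set F' := F.filter (fun e => ¬ e.1 = v) with hF'
          have hF'E : F' ⊆ E := fun f hf => hFE (Finset.filter_subset _ _ hf)
          by_cases hv : t.1 = v
          · have hF'c : F'.card ≤ n := by
              refine card_le_of_subset_erase htF (fun f hf => ?_) hn
              rw [hF', Finset.mem_filter] at hf
              exact Finset.mem_erase.2 ⟨fun hc => hf.2 (hc ▸ hv), hf.1⟩
            by_cases hs : t.2 = s
            · rw [hunf, mwR_insert_eq hs greedy_conf_snd]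
              exact mwR_le_bound (greedy_matching w F')
                (fun e he => hmax e (Finset.filter_subset _ _ (greedy_subset w _ he))) hwt
            · rw [hunf, mwR_insert_ne hs]
              have hIH := (ih F' hF'E hF'c).2 t.2 s (fun h => hs h.symm)
              have hcomm : F'.filter (fun e => ¬ e.2 = t.2) = F₂ := by
                ext f
                simp only [hF', hF₂, Finset.mem_filter, bconf, not_or, Finset.mem_filter]
                constructor
                · rintro ⟨⟨h1, h2⟩, h3⟩
                  exact ⟨h1, fun h => h2 (hv ▸ h.symm), fun h => h3 h.symm⟩
                · rintro ⟨h1, h2, h3⟩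
                  exact ⟨⟨h1, fun h => h2 (hv ▸ h.symm)⟩, fun h => h3 h.symm⟩
              rwa [hcomm] at hIH
          · have htF' : t ∈ F' := Finset.mem_filter.2 ⟨htF, hv⟩
            have hmax' : ∀ f ∈ F', w f ≤ w t := fun f hf =>
              hmax f (Finset.filter_subset _ _ hf)
            have hunf' : greedy w bconf F' = insert t (greedy w bconf
                (F'.filter fun f => ¬ bconf t f)) := greedy_unfold hwinj hF'E htF' hmax'
            have hcomm : F'.filter (fun f => ¬ bconf t f) = F₂.filter (fun e => ¬ e.1 = v) := by
              ext f
              simp only [hF', hF₂, Finset.mem_filter]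
              tauto
            by_cases hs : t.2 = s
            · rw [hunf, hunf', mwR_insert_eq hs greedy_conf_snd,
                mwR_insert_eq hs greedy_conf_snd]
            · rw [hunf, hunf', mwR_insert_ne hs, mwR_insert_ne hs, hcomm]
              exact (ih F₂ hF₂E hF₂c).1 v s
        · intro s0 s hss0
          set F'' := F.filter (fun e => ¬ e.2 = s0) with hF''
          have hF''E : F'' ⊆ E := fun f hf => hFE (Finset.filter_subset _ _ hf)
          by_cases ht2 : t.2 = s0
          · have hF''c : F''.card ≤ n := by
              refine card_le_of_subset_erase htF (fun f hf => ?_) hn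
              rw [hF'', Finset.mem_filter] at hf
              exact Finset.mem_erase.2 ⟨fun hc => hf.2 (hc ▸ ht2), hf.1⟩
            have hts : ¬ t.2 = s := fun h => hss0 (h.symm.trans ht2)
            rw [hunf, mwR_insert_ne hts]
            have hcomm : F''.filter (fun e => ¬ e.1 = t.1) = F₂ := by
              ext f
              simp only [hF'', hF₂, Finset.mem_filter, bconf, not_or]
              constructor
              · rintro ⟨⟨h1, h2⟩, h3⟩
                exact ⟨h1, fun h => h3 h.symm, fun h => h2 (ht2 ▸ h.symm)⟩
              · rintro ⟨h1, h2, h3⟩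
                exact ⟨⟨h1, fun h => h3 (ht2 ▸ h.symm)⟩, fun h => h2 h.symm⟩
            have hIH := (ih F'' hF''E hF''c).1 t.1 s
            rwa [hcomm] at hIH
          · have htF'' : t ∈ F'' := Finset.mem_filter.2 ⟨htF, ht2⟩
            have hmax'' : ∀ f ∈ F'', w f ≤ w t := fun f hf =>
              hmax f (Finset.filter_subset _ _ hf)
            have hunf'' : greedy w bconf F'' = insert t (greedy w bconf
                (F''.filter fun f => ¬ bconf t f)) := greedy_unfold hwinj hF''E htF'' hmax''
            have hcomm : F''.filter (fun f => ¬ bconf t f)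
                = F₂.filter (fun e => ¬ e.2 = s0) := by
              ext f
              simp only [hF'', hF₂, Finset.mem_filter]
              tauto
            by_cases hs : t.2 = s
            · rw [hunf, hunf'', mwR_insert_eq hs greedy_conf_snd,
                mwR_insert_eq hs greedy_conf_snd]
            · rw [hunf, hunf'', mwR_insert_ne hs, mwR_insert_ne hs, hcomm]
              exact (ih F₂ hF₂E hF₂c).2 s0 s hss0
end MWR


section Master

variable {L R : Type*} [DecidableEq L] [DecidableEq R]
variable {E : Finset (L × R)} {w : L × R → ℝ}

/-- The master exchange lemma: if `b` (absent `u`) would be greedily matched to `r`, and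
`(u,r)` is heavier, then whether `u` gets `r` does not depend on the presence of `b`. -/
lemma master (hwinj : Set.InjOn w ↑E) :
    ∀ (n : ℕ) (F : Finset (L × R)), F ⊆ E → F.card ≤ n →
    ∀ (u b : L) (r : R), ¬ u = b →
    (b, r) ∈ greedy w bconf (F.filter fun e => ¬ e.1 = u) →
    (u, r) ∈ F → w (b, r) < w (u, r) →
    ((u, r) ∈ greedy w bconf F ↔ (u, r) ∈ greedy w bconf (F.filter fun e => ¬ e.1 = b)) := by
  intro n
  induction n with
  | zero =>
      intro F hFE hn u b r hub hb hur hw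
      have : F = ∅ := Finset.card_eq_zero.1 (Nat.le_zero.1 hn)
      subst this
      simp at hur
  | succ n ih =>
      intro F hFE hn u b r hub hb hur hw
      have hF : F.Nonempty := ⟨(u, r), hur⟩
      obtain ⟨t, htF, hmax⟩ := F.exists_max_image w hF
      have htE := hFE htF
      have hFuE : (F.filter fun e => ¬ e.1 = u) ⊆ E :=
        fun f hf => hFE (Finset.filter_subset _ _ hf)
      have hFbE : (F.filter fun e => ¬ e.1 = b) ⊆ E :=
        fun f hf => hFE (Finset.filter_subset _ _ hf)
      by_cases htu : t.1 = u
      · by_cases htr : t.2 = r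
        · -- t = (u, r) : both sides hold
          have ht : t = (u, r) := Prod.ext htu htr
          rw [ht] at htF hmax
          have h1 : (u, r) ∈ greedy w bconf F := mem_greedy_max hwinj hFE htF hmax
          have htFb : (u, r) ∈ F.filter fun e => ¬ e.1 = b :=
            Finset.mem_filter.2 ⟨htF, hub⟩
          have h2 : (u, r) ∈ greedy w bconf (F.filter fun e => ¬ e.1 = b) :=
            mem_greedy_max hwinj hFbE htFb
              (fun f hf => hmax f (Finset.filter_subset _ _ hf))
          exact iff_of_true h1 h2
        · -- t = (u, r') with r' ≠ r : both sides fail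
          have hne : (u, r) ≠ t := fun h => htr (by rw [← h])
          have hconf : bconf t (u, r) := Or.inl htu
          have h1 : (u, r) ∉ greedy w bconf F := by
            intro hmem
            have htg := mem_greedy_max hwinj hFE htF hmax
            exact greedy_matching w F t htg (u, r) hmem hne.symm hconf
          have htFb : t ∈ F.filter fun e => ¬ e.1 = b := by
            refine Finset.mem_filter.2 ⟨htF, ?_⟩
            rw [htu]; exact hub
          have h2 : (u, r) ∉ greedy w bconf (F.filter fun e => ¬ e.1 = b) := by
            intro hmem
            have htg := mem_greedy_max hwinj hFbE htFb
              (fun f hf => hmax f (Finset.filter_subset _ _ hf))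
            exact greedy_matching w _ t htg (u, r) hmem hne.symm hconf
          exact iff_of_false h1 h2
      · have htFu : t ∈ F.filter fun e => ¬ e.1 = u := Finset.mem_filter.2 ⟨htF, htu⟩
        have hmaxu : ∀ f ∈ F.filter (fun e => ¬ e.1 = u), w f ≤ w t :=
          fun f hf => hmax f (Finset.filter_subset _ _ hf)
        have htgu : t ∈ greedy w bconf (F.filter fun e => ¬ e.1 = u) :=
          mem_greedy_max hwinj hFuE htFu hmaxu
        by_cases htb : t.1 = b
        · by_cases htr : t.2 = r
          · -- t = (b, r) : weight contradiction
            have ht : t = (b, r) := Prod.ext htb htr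
            have := hmax (u, r) hur
            rw [ht] at this
            exact absurd hw (not_lt.2 this)
          · -- t = (b, r'') : conflicts with (b, r) ∈ greedy (F without u)
            have hne : t ≠ (b, r) := fun h => htr (by rw [h])
            exact absurd (Or.inl htb : bconf t (b, r))
              (greedy_matching w _ t htgu (b, r) hb hne)
        · by_cases htr : t.2 = r
          · -- t at r, t.1 ∉ {u, b} : conflicts with (b, r) ∈ greedy (F without u)
            have hne : t ≠ (b, r) := fun h => htb (by rw [h])
            exact absurd (Or.inr htr : bconf t (b, r))
              (greedy_matching w _ t htgu (b, r) hb hne)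
          · -- main recursive case
            set F₂ := F.filter (fun f => ¬ bconf t f) with hF₂
            have hF₂E : F₂ ⊆ E := fun f hf => hFE (Finset.filter_subset _ _ hf)
            have hF₂c : F₂.card ≤ n := by
              refine card_le_of_subset_erase htF (fun f hf => ?_) hn
              rw [hF₂, Finset.mem_filter] at hf
              exact Finset.mem_erase.2 ⟨fun hc => hf.2 (hc ▸ bconf_refl t), hf.1⟩
            have hur₂ : (u, r) ∈ F₂ := by
              rw [hF₂, Finset.mem_filter]
              exact ⟨hur, fun hc => hc.elim htu htr⟩
            have hcommu : (F.filter fun e => ¬ e.1 = u).filter (fun f => ¬ bconf t f)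
                = F₂.filter (fun e => ¬ e.1 = u) := by
              ext f
              simp only [hF₂, Finset.mem_filter]
              tauto
            have hbne : (b, r) ≠ t := fun h => htb (by rw [← h])
            have hb₂ : (b, r) ∈ greedy w bconf (F₂.filter fun e => ¬ e.1 = u) := by
              rw [← hcommu]
              exact (mem_greedy_iff_of_max hwinj hFuE htFu hmaxu hbne).1 hb
            have hIH := ih F₂ hF₂E hF₂c u b r hub hb₂ hur₂ hw
            have hurne : (u, r) ≠ t := fun h => htu (by rw [← h])
            have hiff1 : ((u, r) ∈ greedy w bconf F ↔ (u, r) ∈ greedy w bconf F₂) :=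
              mem_greedy_iff_of_max hwinj hFE htF hmax hurne
            have htFb : t ∈ F.filter fun e => ¬ e.1 = b := Finset.mem_filter.2 ⟨htF, htb⟩
            have hmaxb : ∀ f ∈ F.filter (fun e => ¬ e.1 = b), w f ≤ w t :=
              fun f hf => hmax f (Finset.filter_subset _ _ hf)
            have hcommb : (F.filter fun e => ¬ e.1 = b).filter (fun f => ¬ bconf t f)
                = F₂.filter (fun e => ¬ e.1 = b) := by
              ext f
              simp only [hF₂, Finset.mem_filter]
              tauto
            have hiff2 : ((u, r) ∈ greedy w bconf (F.filter fun e => ¬ e.1 = b)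
                ↔ (u, r) ∈ greedy w bconf (F₂.filter fun e => ¬ e.1 = b)) := by
              rw [← hcommb]
              exact mem_greedy_iff_of_max hwinj hFbE htFb hmaxb hurne
            rw [hiff1, hiff2]
            exact hIH

end Master


section Main

variable {L R : Type*} [Fintype L] [DecidableEq L] [DecidableEq R]
variable (E : Finset (L × R)) (w : L × R → ℝ)

/-- The set of online vertices whose candidate edge (with sample `A`) is at `r`. -/
noncomputable def SCand (A : Finset L) (r : R) : Finset L :=
  Finset.univ.filter fun x => x ∉ A ∧ (x, r) ∈ greedy w bconf (subL E (insert x A))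

/-- `x` has the minimum-weight candidate edge at `r` among all candidates. -/
def isMinC (A : Finset L) (r : R) (x : L) : Prop :=
  x ∈ SCand E w A r ∧ ∀ y ∈ SCand E w A r, w (x, r) ≤ w (y, r)

/-- The minimum weight of a candidate edge at `r` (`0` if there is none). -/
noncomputable def msw (A : Finset L) (r : R) : ℝ :=
  ∑ x ∈ Finset.univ.filter (fun x => isMinC E w A r x), w (x, r)

/-- Bernoulli measure of the sample `A`. -/
noncomputable def qq (p : ℝ) (A : Finset L) : ℝ :=
  p ^ A.card * (1 - p) ^ ((Finset.univ : Finset L).card - A.card)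

variable {E w}

lemma mem_SCand {A : Finset L} {r : R} {x : L} :
    x ∈ SCand E w A r ↔ x ∉ A ∧ (x, r) ∈ greedy w bconf (subL E (insert x A)) := by
  simp [SCand]

lemma subL_subset (U : Finset L) : subL E U ⊆ E := Finset.filter_subset _ _

lemma SCand_mem_E {A : Finset L} {r : R} {x : L} (h : x ∈ SCand E w A r) : (x, r) ∈ E :=
  subL_subset _ (greedy_subset w _ (mem_SCand.1 h).2)

lemma subL_filter_left {U : Finset L} {v : L} (hv : v ∉ U) :
    (subL E (insert v U)).filter (fun e => ¬ e.1 = v) = subL E U := by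
  ext e
  simp only [subL, Finset.mem_filter, Finset.mem_insert]
  constructor
  · rintro ⟨⟨h1, h2 | h2⟩, h3⟩
    · exact absurd h2 h3
    · exact ⟨h1, h2⟩
  · rintro ⟨h1, h2⟩
    exact ⟨⟨h1, Or.inr h2⟩, fun hc => hv (hc ▸ h2)⟩

lemma qq_nonneg {p : ℝ} (hp : p ∈ Set.Icc (0:ℝ) 1) (A : Finset L) : 0 ≤ qq p A :=
  mul_nonneg (pow_nonneg hp.1 _) (pow_nonneg (by linarith [hp.2]) _)

lemma qq_insert {p : ℝ} {A : Finset L} {b : L} (hbA : b ∉ A) :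
    (1 - p) * qq p (insert b A) = p * qq p A := by
  have hcard : (insert b A).card = A.card + 1 := Finset.card_insert_of_notMem hbA
  have hlt : A.card < (Finset.univ : Finset L).card :=
    Finset.card_lt_card ⟨Finset.subset_univ A, fun h => hbA (h (Finset.mem_univ b))⟩
  have hexp : (Finset.univ : Finset L).card - A.card
      = ((Finset.univ : Finset L).card - (A.card + 1)) + 1 := by omega
  rw [qq, qq, hcard, hexp]
  ring

/-- Adding a left vertex can only increase the matched weight at each right vertex. -/
lemma mwR_mono_insert (hw0 : ∀ e ∈ E, 0 ≤ w e) (hwinj : Set.InjOn w ↑E)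
    {U : Finset L} {v : L} (hv : v ∉ U) (s : R) :
    mwR w (greedy w bconf (subL E U)) s ≤ mwR w (greedy w bconf (subL E (insert v U))) s := by
  have h := (dispAB hw0 hwinj (subL E (insert v U)).card (subL E (insert v U))
    (subL_subset _) le_rfl).1 v s
  rwa [subL_filter_left hv] at h

/-- If `y ∉ U` captures `r` when added, its edge is heavier than `r`'s current match. -/
lemma weight_lt (hw0 : ∀ e ∈ E, 0 ≤ w e) (hwinj : Set.InjOn w ↑E)
    {U : Finset L} {y b : L} {r : R} (hyU : y ∉ U)
    (hy : (y, r) ∈ greedy w bconf (subL E (insert y U)))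
    (hb : (b, r) ∈ greedy w bconf (subL E U)) (hyb : y ≠ b) : w (b, r) < w (y, r) := by
  have h1 : mwR w (greedy w bconf (subL E U)) r = w (b, r) :=
    mwR_eq_of_mem (greedy_matching w _) hb rfl
  have h2 : mwR w (greedy w bconf (subL E (insert y U))) r = w (y, r) :=
    mwR_eq_of_mem (greedy_matching w _) hy rfl
  have h3 := mwR_mono_insert hw0 hwinj hyU r (E := E)
  rw [h1, h2] at h3
  rcases lt_or_eq_of_le h3 with h | h
  · exact h
  · exfalso
    have hbE : (b, r) ∈ E := subL_subset _ (greedy_subset w _ hb)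
    have hyE : (y, r) ∈ E := subL_subset _ (greedy_subset w _ hy)
    exact hyb (congrArg Prod.fst (hwinj hyE hbE h.symm))

/-- Specialization of the master lemma to induced subgraphs. -/
lemma masterSub (hwinj : Set.InjOn w ↑E) {A : Finset L} {x b : L} {r : R}
    (hbA : b ∉ A) (hxA : x ∉ A) (hxb : ¬ x = b)
    (hb : (b, r) ∈ greedy w bconf (subL E (insert b A)))
    (hxE : (x, r) ∈ E) (hwlt : w (b, r) < w (x, r)) :
    ((x, r) ∈ greedy w bconf (subL E (insert x (insert b A)))
      ↔ (x, r) ∈ greedy w bconf (subL E (insert x A))) := by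
  set F := subL E (insert x (insert b A)) with hF
  have hFE : F ⊆ E := subL_subset _
  have h1 : F.filter (fun e => ¬ e.1 = x) = subL E (insert b A) :=
    subL_filter_left (by
      rw [Finset.mem_insert]
      rintro (h | h)
      · exact hxb h
      · exact hxA h)
  have h2 : F.filter (fun e => ¬ e.1 = b) = subL E (insert x A) := by
    have hcomm : insert x (insert b A) = insert b (insert x A) := Finset.insert_comm x b A
    rw [hF, hcomm]
    exact subL_filter_left (by
      rw [Finset.mem_insert]
      rintro (h | h)
      · exact hxb h.symm
      · exact hbA h)
  have hxF : (x, r) ∈ F := by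
    rw [hF]
    exact Finset.mem_filter.2 ⟨hxE, Finset.mem_insert_self _ _⟩
  have := master hwinj F.card F hFE le_rfl x b r hxb (by rw [h1]; exact hb) hxF hwlt
  rwa [h2] at this

end Main


section MswRun

variable {L R : Type*} [Fintype L] [DecidableEq L] [DecidableEq R]
variable {E : Finset (L × R)} {w : L × R → ℝ}

lemma isMinC_unique (hwinj : Set.InjOn w ↑E) {A : Finset L} {r : R} {x y : L}
    (hx : isMinC E w A r x) (hy : isMinC E w A r y) : x = y := by
  have h1 := hx.2 y hy.1
  have h2 := hy.2 x hx.1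
  exact congrArg Prod.fst (hwinj (SCand_mem_E hx.1) (SCand_mem_E hy.1) (le_antisymm h1 h2))

lemma msw_empty {A : Finset L} {r : R} (h : SCand E w A r = ∅) : msw E w A r = 0 := by
  rw [msw]
  have : Finset.univ.filter (fun x => isMinC E w A r x) = ∅ := by
    rw [Finset.filter_eq_empty_iff]
    intro x _ hc
    exact absurd (h ▸ hc.1) (Finset.notMem_empty x)
  rw [this, Finset.sum_empty]

lemma msw_spec (hwinj : Set.InjOn w ↑E) {A : Finset L} {r : R}
    (hne : (SCand E w A r).Nonempty) :
    ∃ x₀, isMinC E w A r x₀ ∧ msw E w A r = w (x₀, r) := by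
  obtain ⟨x₀, hx₀, hmin⟩ := (SCand E w A r).exists_min_image (fun y => w (y, r)) hne
  have hism : isMinC E w A r x₀ := ⟨hx₀, hmin⟩
  refine ⟨x₀, hism, ?_⟩
  rw [msw]
  have : Finset.univ.filter (fun x => isMinC E w A r x) = {x₀} := by
    ext y
    simp only [Finset.mem_filter, Finset.mem_univ, true_and, Finset.mem_singleton]
    exact ⟨fun h => isMinC_unique hwinj h hism, fun h => h ▸ hism⟩
  rw [this, Finset.sum_singleton]

lemma msw_le (hwinj : Set.InjOn w ↑E) {A : Finset L} {r : R} {x : L}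
    (hx : x ∈ SCand E w A r) : msw E w A r ≤ w (x, r) := by
  obtain ⟨x₀, hism, heq⟩ := msw_spec hwinj ⟨x, hx⟩
  rw [heq]
  exact hism.2 x hx

/-- Invariant of the online algorithm: any currently matched edge is the candidate
edge of its (online) left endpoint. -/
def InvP (E : Finset (L × R)) (w : L × R → ℝ) (A : Finset L) (M : Finset (L × R)) : Prop :=
  ∀ e ∈ M, e.1 ∉ A ∧ e ∈ greedy w bconf (subL E (insert e.1 A))

lemma stepB_mono (A : Finset L) (M : Finset (L × R)) (u : L) :
    M ⊆ stepB E w A M u := Finset.subset_union_left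

lemma foldl_mono (A : Finset L) :
    ∀ (lst : List L) (M : Finset (L × R)), M ⊆ List.foldl (stepB E w A) M lst := by
  intro lst
  induction lst with
  | nil => intro M; exact le_refl M
  | cons x rest ih =>
      intro M
      exact (stepB_mono A M x).trans (ih (stepB E w A M x))

lemma stepB_inv {A : Finset L} {M : Finset (L × R)} {u : L} (hu : u ∉ A)
    (h : InvP E w A M) : InvP E w A (stepB E w A M u) := by
  intro e he
  rcases Finset.mem_union.1 he with he | he
  · exact h e he
  · have he' := Finset.mem_filter.1 he
    refine ⟨?_, ?_⟩
    · rw [he'.2.1]; exact hu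
    · rw [he'.2.1]; exact he'.1

lemma foldl_inv {A : Finset L} :
    ∀ (lst : List L) (M : Finset (L × R)), (∀ x ∈ lst, x ∉ A) → InvP E w A M →
      InvP E w A (List.foldl (stepB E w A) M lst) := by
  intro lst
  induction lst with
  | nil => intro M _ h; exact h
  | cons x rest ih =>
      intro M hlst h
      exact ih _ (fun y hy => hlst y (List.mem_cons_of_mem x hy))
        (stepB_inv (hlst x (List.mem_cons_self)) h)

lemma run_exists_at (A : Finset L) (r : R) :
    ∀ (lst : List L) (M : Finset (L × R)), InvP E w A M → (∀ x ∈ lst, x ∉ A) →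
    ∀ u ∈ lst, (u, r) ∈ greedy w bconf (subL E (insert u A)) →
    ∃ e ∈ List.foldl (stepB E w A) M lst, e.2 = r ∧ e.1 ∉ A ∧
      e ∈ greedy w bconf (subL E (insert e.1 A)) := by
  intro lst
  induction lst with
  | nil => intro M _ _ u hu; exact absurd hu (List.not_mem_nil)
  | cons x rest ih =>
      intro M hInv hlst u hu hcand
      have hInv' : InvP E w A (stepB E w A M x) :=
        stepB_inv (hlst x (List.mem_cons_self)) hInv
      rcases List.mem_cons.1 hu with rfl | hu
      · by_cases hex : ∃ f ∈ M, f.2 = r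
        · obtain ⟨f, hfM, hf2⟩ := hex
          have hff : f ∈ List.foldl (stepB E w A) M (u :: rest) :=
            foldl_mono A (u :: rest) M hfM
          exact ⟨f, hff, hf2, (hInv f hfM).1, (hInv f hfM).2⟩
        · push_neg at hex
          have hur : (u, r) ∈ stepB E w A M u := by
            apply Finset.mem_union_right
            refine Finset.mem_filter.2 ⟨hcand, rfl, ?_⟩
            intro f hf
            exact hex f hf
          have : (u, r) ∈ List.foldl (stepB E w A) M (u :: rest) := by
            show (u, r) ∈ List.foldl (stepB E w A) (stepB E w A M u) rest
            exact foldl_mono A rest _ hur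
          exact ⟨(u, r), this, rfl, hlst u (List.mem_cons_self), hcand⟩
      · exact ih (stepB E w A M x) hInv'
          (fun y hy => hlst y (List.mem_cons_of_mem x hy)) u hu hcand

/-- Lower bound on the weight of the online algorithm's output. -/
lemma alg_lb (hw0 : ∀ e ∈ E, 0 ≤ w e) (hwinj : Set.InjOn w ↑E) (A : Finset L)
    (lst : List L) (hlst : ∀ x : L, x ∈ lst ↔ x ∉ A) :
    ∑ r ∈ E.image Prod.snd, msw E w A r ≤ ∑ e ∈ List.foldl (stepB E w A) ∅ lst, w e := by
  set M := List.foldl (stepB E w A) ∅ lst with hM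
  have hInv : InvP E w A M :=
    foldl_inv lst ∅ (fun x hx => (hlst x).1 hx) (fun e he => absurd he (Finset.notMem_empty e))
  have hME : ∀ e ∈ M, e ∈ E := fun e he => subL_subset _ (greedy_subset w _ (hInv e he).2)
  rw [← Finset.sum_fiberwise_of_maps_to
    (fun e he => Finset.mem_image_of_mem Prod.snd (hME e he)) w]
  apply Finset.sum_le_sum
  intro r _
  rcases (SCand E w A r).eq_empty_or_nonempty with hS | hS
  · rw [msw_empty hS]
    exact Finset.sum_nonneg fun e he => hw0 e (hME e (Finset.mem_filter.1 he).1)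
  · obtain ⟨x₀, hx₀⟩ := hS
    have hx := mem_SCand.1 hx₀
    obtain ⟨e, heM, he2, he1, heg⟩ := run_exists_at A r lst ∅
      (fun f hf => absurd hf (Finset.notMem_empty f)) (fun x hx => (hlst x).1 hx)
      x₀ ((hlst x₀).2 hx.1) hx.2
    have hee : e = (e.1, r) := Prod.ext rfl he2
    have heSC : e.1 ∈ SCand E w A r := mem_SCand.2 ⟨he1, by rw [← hee]; exact heg⟩
    calc msw E w A r ≤ w (e.1, r) := msw_le hwinj heSC
    _ = w e := by rw [← hee]
    _ ≤ ∑ f ∈ M.filter (fun f => f.2 = r), w f :=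
        Finset.single_le_sum (fun f hf => hw0 f (hME f (Finset.mem_filter.1 hf).1))
          (Finset.mem_filter.2 ⟨heM, he2⟩)

end MswRun


section KeyIneq

variable {L R : Type*} [Fintype L] [DecidableEq L] [DecidableEq R]
variable {E : Finset (L × R)} {w : L × R → ℝ}

/-- The key probabilistic inequality: the probability (weighted by the Bernoulli measure)
that `x`'s candidate edge at `r` is the lightest candidate at `r` is at least `p` times
the probability that `x` has a candidate edge at `r`. -/
lemma key_ineq (hw0 : ∀ e ∈ E, 0 ≤ w e) (hwinj : Set.InjOn w ↑E) {p : ℝ}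
    (hp : p ∈ Set.Icc (0:ℝ) 1) (x : L) (r : R) :
    p * ∑ A ∈ (Finset.univ : Finset L).powerset.filter (fun A => x ∈ SCand E w A r), qq p A
      ≤ ∑ A ∈ (Finset.univ : Finset L).powerset.filter
          (fun A => isMinC E w A r x), qq p A := by
  classical
  set P := (Finset.univ : Finset L).powerset with hP
  set S := P.filter (fun A => x ∈ SCand E w A r) with hS
  set Mm := P.filter (fun A => isMinC E w A r x) with hMm
  set N := S.filter (fun A => ¬ isMinC E w A r x) with hN
  have hsplit : ∑ A ∈ S, qq p A
      = ∑ A ∈ S.filter (fun A => isMinC E w A r x), qq p A + ∑ A ∈ N, qq p A :=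
    (Finset.sum_filter_add_sum_filter_not S _ _).symm
  have hSM : S.filter (fun A => isMinC E w A r x) = Mm := by
    ext A
    simp only [hS, hMm, Finset.mem_filter, and_assoc]
    constructor
    · rintro ⟨h1, _, h3⟩; exact ⟨h1, h3⟩
    · rintro ⟨h1, h3⟩; exact ⟨h1, h3.1, h3⟩
  -- the canonical heaviest lighter blocker
  set bfun : Finset L → L := fun A =>
    if h : ((SCand E w A r).filter (fun y => w (y, r) < w (x, r))).Nonempty then
      (((SCand E w A r).filter (fun y => w (y, r) < w (x, r))).exists_max_image
        (fun y => w (y, r)) h).choose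
    else x with hbfun
  have hbspec : ∀ (A : Finset L),
      ∀ hne : ((SCand E w A r).filter (fun y => w (y, r) < w (x, r))).Nonempty,
      bfun A ∈ (SCand E w A r).filter (fun y => w (y, r) < w (x, r)) ∧
        ∀ y ∈ (SCand E w A r).filter (fun y => w (y, r) < w (x, r)),
          w (y, r) ≤ w (bfun A, r) := by
    intro A hne
    have hrw : bfun A = (((SCand E w A r).filter (fun y => w (y, r) < w (x, r))).exists_max_image
        (fun y => w (y, r)) hne).choose := by
      rw [hbfun]
      exact dif_pos hne
    rw [hrw]
    obtain ⟨h1, h2⟩ := (((SCand E w A r).filter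
      (fun y => w (y, r) < w (x, r))).exists_max_image (fun y => w (y, r)) hne).choose_spec
    exact ⟨h1, h2⟩
  -- properties of elements of N
  have hNfacts : ∀ A ∈ N, x ∈ SCand E w A r ∧
      ((SCand E w A r).filter (fun y => w (y, r) < w (x, r))).Nonempty := by
    intro A hA
    rw [hN, Finset.mem_filter] at hA
    obtain ⟨hAS, hnm⟩ := hA
    rw [hS, Finset.mem_filter] at hAS
    refine ⟨hAS.2, ?_⟩
    have : ¬ ∀ y ∈ SCand E w A r, w (x, r) ≤ w (y, r) := by
      intro hall
      exact hnm ⟨hAS.2, hall⟩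
    push_neg at this
    obtain ⟨y, hy1, hy2⟩ := this
    exact ⟨y, Finset.mem_filter.2 ⟨hy1, hy2⟩⟩
  have himg : ∀ A ∈ N, insert (bfun A) A ∈ Mm ∧ bfun A ∉ A ∧
      (bfun A, r) ∈ greedy w bconf (subL E (insert (bfun A) A)) := by
    intro A hA
    obtain ⟨hxS, hne⟩ := hNfacts A hA
    obtain ⟨hbmem, hbmax⟩ := hbspec A hne
    rw [Finset.mem_filter] at hbmem
    obtain ⟨hbS, hbw⟩ := hbmem
    have hbA : bfun A ∉ A := (mem_SCand.1 hbS).1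
    have hbg : (bfun A, r) ∈ greedy w bconf (subL E (insert (bfun A) A)) :=
      (mem_SCand.1 hbS).2
    have hxA : x ∉ A := (mem_SCand.1 hxS).1
    have hxE : (x, r) ∈ E := SCand_mem_E hxS
    have hxb : ¬ x = bfun A := fun h => lt_irrefl _ (h ▸ hbw)
    have hxg : (x, r) ∈ greedy w bconf (subL E (insert x A)) := (mem_SCand.1 hxS).2
    have hxmem : x ∈ SCand E w (insert (bfun A) A) r := by
      refine mem_SCand.2 ⟨?_, ?_⟩
      · rw [Finset.mem_insert]
        rintro (h | h)
        · exact hxb h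
        · exact hxA h
      · exact (masterSub hwinj hbA hxA hxb hbg hxE hbw).2 hxg
    refine ⟨?_, hbA, hbg⟩
    rw [hMm, Finset.mem_filter]
    refine ⟨Finset.mem_powerset.2 (Finset.subset_univ _), hxmem, ?_⟩
    intro y hy
    by_contra hcon
    have hlt : w (y, r) < w (x, r) := not_le.1 hcon
    have hyins : y ∉ insert (bfun A) A := (mem_SCand.1 hy).1
    have hyb : y ≠ bfun A := fun h => hyins (h ▸ Finset.mem_insert_self _ _)
    have hyA : y ∉ A := fun h => hyins (Finset.mem_insert_of_mem h)
    have hyx : ¬ y = x := fun h => lt_irrefl _ (h ▸ hlt)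
    have hygb : (y, r) ∈ greedy w bconf (subL E (insert y (insert (bfun A) A))) :=
      (mem_SCand.1 hy).2
    have hwby : w (bfun A, r) < w (y, r) := weight_lt hw0 hwinj hyins hygb hbg hyb
    have hyE : (y, r) ∈ E := SCand_mem_E hy
    have hyg : (y, r) ∈ greedy w bconf (subL E (insert y A)) :=
      (masterSub hwinj hbA hyA (fun h => hyb h) hbg hyE hwby).1 hygb
    have hySA : y ∈ SCand E w A r := mem_SCand.2 ⟨hyA, hyg⟩
    have := hbmax y (Finset.mem_filter.2 ⟨hySA, hlt⟩)
    linarith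
  have hinj : ∀ A₁ ∈ N, ∀ A₂ ∈ N, insert (bfun A₁) A₁ = insert (bfun A₂) A₂ → A₁ = A₂ := by
    intro A₁ hA₁ A₂ hA₂ heq
    obtain ⟨_, hbA₁, hbg₁⟩ := himg A₁ hA₁
    obtain ⟨_, hbA₂, hbg₂⟩ := himg A₂ hA₂
    have hbg₂' : (bfun A₂, r) ∈ greedy w bconf (subL E (insert (bfun A₁) A₁)) := by
      rw [heq]; exact hbg₂
    have hbb : bfun A₁ = bfun A₂ := by
      by_contra hne
      have hconf : bconf (bfun A₁, r) (bfun A₂, r) := Or.inr rfl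
      exact greedy_matching w _ _ hbg₁ _ hbg₂' (fun h => hne (congrArg Prod.fst h)) hconf
    calc A₁ = (insert (bfun A₁) A₁).erase (bfun A₁) := (Finset.erase_insert hbA₁).symm
    _ = (insert (bfun A₂) A₂).erase (bfun A₂) := by rw [heq, hbb]
    _ = A₂ := Finset.erase_insert hbA₂
  have hNM : p * ∑ A ∈ N, qq p A ≤ (1 - p) * ∑ A ∈ Mm, qq p A := by
    have h1 : p * ∑ A ∈ N, qq p A = ∑ A ∈ N, (1 - p) * qq p (insert (bfun A) A) := by
      rw [Finset.mul_sum]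
      refine Finset.sum_congr rfl fun A hA => ?_
      rw [qq_insert (himg A hA).2.1]
    have h2 : ∑ A ∈ N, (1 - p) * qq p (insert (bfun A) A)
        = ∑ B ∈ N.image (fun A => insert (bfun A) A), (1 - p) * qq p B :=
      (Finset.sum_image (f := fun B => (1 - p) * qq p B)
        (g := fun A => insert (bfun A) A) hinj).symm
    have h3 : ∑ B ∈ N.image (fun A => insert (bfun A) A), (1 - p) * qq p B
        ≤ ∑ B ∈ Mm, (1 - p) * qq p B := by
      apply Finset.sum_le_sum_of_subset_of_nonneg
      · intro B hB
        obtain ⟨A, hA, rfl⟩ := Finset.mem_image.1 hB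
        exact (himg A hA).1
      · intro B _ _
        exact mul_nonneg (by linarith [hp.2]) (qq_nonneg hp B)
    calc p * ∑ A ∈ N, qq p A
        = ∑ A ∈ N, (1 - p) * qq p (insert (bfun A) A) := h1
    _ = ∑ B ∈ N.image (fun A => insert (bfun A) A), (1 - p) * qq p B := h2
    _ ≤ ∑ B ∈ Mm, (1 - p) * qq p B := h3
    _ = (1 - p) * ∑ B ∈ Mm, qq p B := (Finset.mul_sum _ _ _).symm
  have hMnonneg : 0 ≤ ∑ A ∈ Mm, qq p A :=
    Finset.sum_nonneg fun A _ => qq_nonneg hp A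
  have hNnonneg : 0 ≤ ∑ A ∈ N, qq p A :=
    Finset.sum_nonneg fun A _ => qq_nonneg hp A
  rw [hsplit, hSM]
  have hp1 := hp.1
  have hp2 := hp.2
  nlinarith [hNM, hMnonneg]

end KeyIneq


section Assembly

variable {L R : Type*} [Fintype L] [DecidableEq L] [DecidableEq R]
variable {E : Finset (L × R)} {w : L × R → ℝ}

lemma sum_greedy_fiber (B : Finset L) :
    ∑ e ∈ greedy w bconf (subL E B), w e
      = ∑ r ∈ E.image Prod.snd, ∑ x ∈ (Finset.univ : Finset L),
          (if (x, r) ∈ greedy w bconf (subL E B) then w (x, r) else 0) := by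
  have hmap : ∀ e ∈ greedy w bconf (subL E B), e.2 ∈ E.image Prod.snd :=
    fun e he => Finset.mem_image_of_mem Prod.snd (subL_subset _ (greedy_subset w _ he))
  rw [← Finset.sum_fiberwise_of_maps_to hmap w]
  refine Finset.sum_congr rfl fun r _ => ?_
  have hset : (greedy w bconf (subL E B)).filter (fun e => e.2 = r)
      = (Finset.univ.filter (fun x : L => (x, r) ∈ greedy w bconf (subL E B))).image
          (fun x => (x, r)) := by
    ext e
    simp only [Finset.mem_filter, Finset.mem_image, Finset.mem_univ, true_and]
    constructor
    · rintro ⟨h1, h2⟩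
      have hee : e = (e.1, r) := Prod.ext rfl h2
      exact ⟨e.1, by rw [← hee]; exact h1, hee.symm⟩
    · rintro ⟨y, hy, rfl⟩
      exact ⟨hy, rfl⟩
  rw [hset, Finset.sum_image (fun y _ z _ h => congrArg Prod.fst h), Finset.sum_filter]

lemma greedy_side {p : ℝ} :
    (1 - p) * ∑ B ∈ (Finset.univ : Finset L).powerset,
        qq p B * (∑ e ∈ greedy w bconf (subL E B), w e)
      = ∑ r ∈ E.image Prod.snd, ∑ x ∈ (Finset.univ : Finset L),
          w (x, r) * (p * ∑ A ∈ (Finset.univ : Finset L).powerset.filter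
            (fun A => x ∈ SCand E w A r), qq p A) := by
  have h1 : ∀ B ∈ (Finset.univ : Finset L).powerset,
      qq p B * (∑ e ∈ greedy w bconf (subL E B), w e)
        = ∑ r ∈ E.image Prod.snd, ∑ x ∈ (Finset.univ : Finset L),
            (if (x, r) ∈ greedy w bconf (subL E B) then qq p B * w (x, r) else 0) := by
    intro B _
    rw [sum_greedy_fiber, Finset.mul_sum]
    refine Finset.sum_congr rfl fun r _ => ?_
    rw [Finset.mul_sum]
    refine Finset.sum_congr rfl fun x _ => ?_
    rw [mul_ite, mul_zero]
  rw [Finset.sum_congr rfl h1, Finset.sum_comm, Finset.mul_sum]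
  refine Finset.sum_congr rfl fun r _ => ?_
  rw [Finset.sum_comm, Finset.mul_sum]
  refine Finset.sum_congr rfl fun x _ => ?_
  have h2 : ∑ B ∈ (Finset.univ : Finset L).powerset,
      (if (x, r) ∈ greedy w bconf (subL E B) then qq p B * w (x, r) else 0)
        = ∑ B ∈ (Finset.univ : Finset L).powerset.filter
            (fun B => (x, r) ∈ greedy w bconf (subL E B)), qq p B * w (x, r) :=
    (Finset.sum_filter _ _).symm
  rw [h2]
  have h3 : ∑ B ∈ (Finset.univ : Finset L).powerset.filter
        (fun B => (x, r) ∈ greedy w bconf (subL E B)), ((1 - p) * qq p B)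
      = ∑ A ∈ (Finset.univ : Finset L).powerset.filter
        (fun A => x ∈ SCand E w A r), (p * qq p A) := by
    refine Finset.sum_nbij' (fun B => B.erase x) (fun A => insert x A) ?_ ?_ ?_ ?_ ?_
    · intro B hB
      rw [Finset.mem_filter] at hB
      have hxB : x ∈ B := by
        have := greedy_subset w _ hB.2
        exact (Finset.mem_filter.1 this).2
      rw [Finset.mem_filter]
      refine ⟨Finset.mem_powerset.2 (Finset.subset_univ _), mem_SCand.2
        ⟨Finset.notMem_erase x B, ?_⟩⟩
      rw [Finset.insert_erase hxB]
      exact hB.2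
    · intro A hA
      rw [Finset.mem_filter] at hA
      rw [Finset.mem_filter]
      exact ⟨Finset.mem_powerset.2 (Finset.subset_univ _), (mem_SCand.1 hA.2).2⟩
    · intro B hB
      rw [Finset.mem_filter] at hB
      have hxB : x ∈ B := by
        have := greedy_subset w _ hB.2
        exact (Finset.mem_filter.1 this).2
      exact Finset.insert_erase hxB
    · intro A hA
      rw [Finset.mem_filter] at hA
      exact Finset.erase_insert (mem_SCand.1 hA.2).1
    · intro B hB
      rw [Finset.mem_filter] at hB
      have hxB : x ∈ B := by
        have := greedy_subset w _ hB.2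
        exact (Finset.mem_filter.1 this).2
      have := qq_insert (p := p) (Finset.notMem_erase x B)
      rw [Finset.insert_erase hxB] at this
      exact this
  calc (1 - p) * ∑ B ∈ (Finset.univ : Finset L).powerset.filter
        (fun B => (x, r) ∈ greedy w bconf (subL E B)), qq p B * w (x, r)
      = (∑ B ∈ (Finset.univ : Finset L).powerset.filter
          (fun B => (x, r) ∈ greedy w bconf (subL E B)), (1 - p) * qq p B) * w (x, r) := by
        rw [Finset.sum_mul, Finset.mul_sum]
        refine Finset.sum_congr rfl fun B _ => ?_
        ring
  _ = (∑ A ∈ (Finset.univ : Finset L).powerset.filter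
        (fun A => x ∈ SCand E w A r), p * qq p A) * w (x, r) := by rw [h3]
  _ = w (x, r) * (p * ∑ A ∈ (Finset.univ : Finset L).powerset.filter
        (fun A => x ∈ SCand E w A r), qq p A) := by
        rw [Finset.mul_sum, Finset.sum_mul, Finset.mul_sum]
        refine Finset.sum_congr rfl fun A _ => ?_
        ring

lemma msw_side {p : ℝ} :
    ∑ A ∈ (Finset.univ : Finset L).powerset, qq p A * (∑ r ∈ E.image Prod.snd, msw E w A r)
      = ∑ r ∈ E.image Prod.snd, ∑ x ∈ (Finset.univ : Finset L),
          w (x, r) * ∑ A ∈ (Finset.univ : Finset L).powerset.filter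
            (fun A => isMinC E w A r x), qq p A := by
  have h1 : ∀ A ∈ (Finset.univ : Finset L).powerset,
      qq p A * (∑ r ∈ E.image Prod.snd, msw E w A r)
        = ∑ r ∈ E.image Prod.snd, ∑ x ∈ (Finset.univ : Finset L),
            (if isMinC E w A r x then qq p A * w (x, r) else 0) := by
    intro A _
    rw [Finset.mul_sum]
    refine Finset.sum_congr rfl fun r _ => ?_
    rw [msw, ← Finset.sum_filter]
    rw [Finset.mul_sum]
  rw [Finset.sum_congr rfl h1, Finset.sum_comm]
  refine Finset.sum_congr rfl fun r _ => ?_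
  rw [Finset.sum_comm]
  refine Finset.sum_congr rfl fun x _ => ?_
  rw [← Finset.sum_filter]
  rw [Finset.mul_sum]
  refine Finset.sum_congr rfl fun A _ => ?_
  ring

end Assembly

/-- For the greedy-based online algorithm with vertex-sampling
probability `p`, and for every rule `σ` assigning to each sample `L'` an arrival order of
the remaining vertices `L \ L'`, the expected weight of the output matching is at least
`(1 - p)` times the expected weight of the greedy matching on the sample. -/
theorem stmt2 {L R : Type*} [Fintype L] [DecidableEq L] [DecidableEq R]
    (E : Finset (L × R)) (w : L × R → ℝ)
    (hw0 : ∀ e ∈ E, 0 ≤ w e) (hwinj : Set.InjOn w ↑E)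
    (p : ℝ) (hp : p ∈ Set.Icc (0 : ℝ) 1)
    (σ : Finset L → List L)
    (hσ : ∀ A : Finset L, (σ A).Perm (Finset.univ \ A).toList) :
    expSubsets p Finset.univ (fun A => ∑ e ∈ runB E w A (σ A), w e)
      ≥ (1 - p) *
        expSubsets p Finset.univ (fun A => ∑ e ∈ greedy w bconf (subL E A), w e) := by
  classical
  have hexp : ∀ f : Finset L → ℝ,
      expSubsets p Finset.univ f = ∑ A ∈ (Finset.univ : Finset L).powerset, qq p A * f A := by
    intro f
    rw [expSubsets]
    exact Finset.sum_congr rfl fun A _ => by rw [qq]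
  rw [ge_iff_le, hexp, hexp]
  calc (1 - p) * ∑ A ∈ (Finset.univ : Finset L).powerset,
        qq p A * (∑ e ∈ greedy w bconf (subL E A), w e)
      = ∑ r ∈ E.image Prod.snd, ∑ x ∈ (Finset.univ : Finset L),
          w (x, r) * (p * ∑ A ∈ (Finset.univ : Finset L).powerset.filter
            (fun A => x ∈ SCand E w A r), qq p A) := greedy_side
  _ ≤ ∑ r ∈ E.image Prod.snd, ∑ x ∈ (Finset.univ : Finset L),
          w (x, r) * ∑ A ∈ (Finset.univ : Finset L).powerset.filter
            (fun A => isMinC E w A r x), qq p A := by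
      refine Finset.sum_le_sum fun r _ => Finset.sum_le_sum fun x _ => ?_
      by_cases hxE : (x, r) ∈ E
      · exact mul_le_mul_of_nonneg_left (key_ineq hw0 hwinj hp x r) (hw0 _ hxE)
      · have hS0 : (Finset.univ : Finset L).powerset.filter
            (fun A => x ∈ SCand E w A r) = ∅ := by
          rw [Finset.filter_eq_empty_iff]
          intro A _ hc
          exact hxE (SCand_mem_E hc)
        have hM0 : (Finset.univ : Finset L).powerset.filter
            (fun A => isMinC E w A r x) = ∅ := by
          rw [Finset.filter_eq_empty_iff]
          intro A _ hc
          exact hxE (SCand_mem_E hc.1)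
        rw [hS0, hM0]
        simp
  _ = ∑ A ∈ (Finset.univ : Finset L).powerset,
        qq p A * (∑ r ∈ E.image Prod.snd, msw E w A r) := msw_side.symm
  _ ≤ ∑ A ∈ (Finset.univ : Finset L).powerset, qq p A * (∑ e ∈ runB E w A (σ A), w e) := by
      refine Finset.sum_le_sum fun A _ => ?_
      refine mul_le_mul_of_nonneg_left ?_ (qq_nonneg hp A)
      have hlst : ∀ x : L, x ∈ σ A ↔ x ∉ A := by
        intro x
        rw [(hσ A).mem_iff, Finset.mem_toList, Finset.mem_sdiff]
        simp
      exact alg_lb hw0 hwinj A (σ A) hlst
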